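/- In a Tait-style infinitary sequent calculus with axiom rule (Γ, A, ¬A is derivable for atomic A), the ω-rule/universal rule (from derivations of Γ, A(a) for all terms a infer Γ, ∀x A(x)), finite conjunction and disjunction rules, and a weakening-closed derivability notion, cut is admissible for the propositional and quantifier fragment: if Γ, A and Δ, ¬A are both derivable then Γ, Δ is derivable, proved by induction on the logical complexity of A with side induction on derivation lengths. -/

import Mathlib

universe u

/-- Formulas in negation normal form over atoms `atom` and terms `term`. -/
inductive Fml (atom term : Type u) : Type u
  | pos : atom → Fml atom term
  | neg : atom → Fml atom term
  | and : Fml atom term → Fml atom term → Fml atom term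
  | or : Fml atom term → Fml atom term → Fml atom term
  | all : (term → Fml atom term) → Fml atom term
  | ex : (term → Fml atom term) → Fml atom term

/-- Complementation `A ↦ ¬A` on negation normal forms (De Morgan dual);
it satisfies `¬¬A = A`. -/
def Fml.compl {atom term : Type u} : Fml atom term → Fml atom term
  | .pos a => .neg a
  | .neg a => .pos a
  | .and A B => .or A.compl B.compl
  | .or A B => .and A.compl B.compl
  | .all f => .ex fun t => (f t).compl
  | .ex f => .all fun t => (f t).compl

/-- Tait-style infinitary sequent calculus: axiom rule, conjunction and
disjunction rules, the ω-rule for `∀`, a rule for `∃`, and weakening. -/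
inductive Der {atom term : Type u} : Set (Fml atom term) → Prop
  | ax (Γ : Set (Fml atom term)) (a : atom) :
      Der (Γ ∪ {Fml.pos a, Fml.neg a})
  | andI {Γ : Set (Fml atom term)} {A B : Fml atom term} :
      Der (Γ ∪ {A}) → Der (Γ ∪ {B}) → Der (Γ ∪ {Fml.and A B})
  | orIL {Γ : Set (Fml atom term)} {A B : Fml atom term} :
      Der (Γ ∪ {A}) → Der (Γ ∪ {Fml.or A B})
  | orIR {Γ : Set (Fml atom term)} {A B : Fml atom term} :
      Der (Γ ∪ {B}) → Der (Γ ∪ {Fml.or A B})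
  | allI {Γ : Set (Fml atom term)} {f : term → Fml atom term} :
      (∀ a : term, Der (Γ ∪ {f a})) → Der (Γ ∪ {Fml.all f})
  | exI {Γ : Set (Fml atom term)} {f : term → Fml atom term} (a : term) :
      Der (Γ ∪ {f a}) → Der (Γ ∪ {Fml.ex f})
  | weak {Γ : Set (Fml atom term)} (Δ : Set (Fml atom term)) :
      Der Γ → Der (Γ ∪ Δ)

section CutAux

universe v
variable {atom term : Type v}

theorem Der.mono {Γ Δ : Set (Fml atom term)} (h : Der Γ) (hs : Γ ⊆ Δ) : Der Δ := by
  have := Der.weak Δ h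
  rwa [Set.union_eq_self_of_subset_left hs] at this

theorem Fml.compl_compl (A : Fml atom term) : A.compl.compl = A := by
  induction A with
  | pos a => rfl
  | neg a => rfl
  | and B C ihB ihC => simp [Fml.compl, ihB, ihC]
  | or B C ihB ihC => simp [Fml.compl, ihB, ihC]
  | all f ih => simp only [Fml.compl]; congr 1; funext t; exact ih t
  | ex f ih => simp only [Fml.compl]; congr 1; funext t; exact ih t

theorem cut_absorb {T : Set (Fml atom term)} {A : Fml atom term} (h : A ∈ T) :
    T ∪ {A} = T :=
  Set.union_eq_self_of_subset_right (Set.singleton_subset_iff.mpr h)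

theorem cut_prem_sub {Γ₀ Γ : Set (Fml atom term)} {X A : Fml atom term}
    (h : Γ₀ ⊆ Γ ∪ {X}) : Γ₀ ∪ {A} ⊆ (Γ ∪ {A}) ∪ {X} := by
  intro x hx
  simp only [Set.mem_union] at hx ⊢
  rcases hx with hx | hx
  · have := h hx
    simp only [Set.mem_union] at this
    tauto
  · tauto

/-- Generic engine: induction on a derivation of `S ⊆ Γ ∪ {X}`, with
handlers for the cases where `X` is principal. -/
theorem cut_gen {X : Fml atom term} {Δ : Set (Fml atom term)}
    (hpos : ∀ b, X = Fml.pos b → ∀ Γ', Fml.neg b ∈ Γ' ∪ Δ → Der (Γ' ∪ Δ))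
    (hneg : ∀ b, X = Fml.neg b → ∀ Γ', Fml.pos b ∈ Γ' ∪ Δ → Der (Γ' ∪ Δ))
    (hand : ∀ A B, X = Fml.and A B → ∀ Γ',
      Der ((Γ' ∪ Δ) ∪ {A}) → Der ((Γ' ∪ Δ) ∪ {B}) → Der (Γ' ∪ Δ))
    (horl : ∀ A B, X = Fml.or A B → ∀ Γ', Der ((Γ' ∪ Δ) ∪ {A}) → Der (Γ' ∪ Δ))
    (horr : ∀ A B, X = Fml.or A B → ∀ Γ', Der ((Γ' ∪ Δ) ∪ {B}) → Der (Γ' ∪ Δ))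
    (hall : ∀ f, X = Fml.all f → ∀ Γ', (∀ t, Der ((Γ' ∪ Δ) ∪ {f t})) → Der (Γ' ∪ Δ))
    (hex : ∀ f, X = Fml.ex f → ∀ Γ' (t : term), Der ((Γ' ∪ Δ) ∪ {f t}) → Der (Γ' ∪ Δ))
    {S : Set (Fml atom term)} (h : Der S) :
    ∀ Γ, S ⊆ Γ ∪ {X} → Der (Γ ∪ Δ) := by
  induction h with
  | ax Γ₀ b =>
    intro Γ hsub
    have hp : Fml.pos b ∈ Γ ∪ {X} := hsub (by simp)
    have hn : Fml.neg b ∈ Γ ∪ {X} := hsub (by simp)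
    simp only [Set.mem_union, Set.mem_singleton_iff] at hp hn
    rcases hp with hp | hp
    · rcases hn with hn | hn
      · have hax := Der.ax (Γ ∪ Δ) b
        rwa [Set.union_eq_self_of_subset_right (by
          simp only [Set.insert_subset_iff, Set.singleton_subset_iff, Set.mem_union]
          exact ⟨Or.inl hp, Or.inl hn⟩)] at hax
      · exact hneg b hn.symm Γ (Set.mem_union_left Δ hp)
    · exact hpos b hp.symm Γ (by
        rcases hn with hn | hn
        · exact Set.mem_union_left Δ hn
        · rw [← hp] at hn; cases hn)
  | andI h1 h2 ih1 ih2 =>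
    rename_i Γ₀ A B
    intro Γ hsub
    have hΓ₀ : Γ₀ ⊆ Γ ∪ {X} := (Set.union_subset_iff.mp hsub).1
    have hmem : Fml.and A B ∈ Γ ∪ {X} := hsub (by simp)
    have d1 := ih1 (Γ ∪ {A}) (cut_prem_sub hΓ₀)
    have d2 := ih2 (Γ ∪ {B}) (cut_prem_sub hΓ₀)
    rw [Set.union_right_comm] at d1 d2
    simp only [Set.mem_union, Set.mem_singleton_iff] at hmem
    rcases hmem with hm | hm
    · have := Der.andI d1 d2
      rwa [cut_absorb (Set.mem_union_left Δ hm)] at this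
    · exact hand A B hm.symm Γ d1 d2
  | orIL h1 ih1 =>
    rename_i Γ₀ A B
    intro Γ hsub
    have hΓ₀ : Γ₀ ⊆ Γ ∪ {X} := (Set.union_subset_iff.mp hsub).1
    have hmem : Fml.or A B ∈ Γ ∪ {X} := hsub (by simp)
    have d1 := ih1 (Γ ∪ {A}) (cut_prem_sub hΓ₀)
    rw [Set.union_right_comm] at d1
    simp only [Set.mem_union, Set.mem_singleton_iff] at hmem
    rcases hmem with hm | hm
    · have := Der.orIL (B := B) d1
      rwa [cut_absorb (Set.mem_union_left Δ hm)] at this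
    · exact horl A B hm.symm Γ d1
  | orIR h1 ih1 =>
    rename_i Γ₀ A B
    intro Γ hsub
    have hΓ₀ : Γ₀ ⊆ Γ ∪ {X} := (Set.union_subset_iff.mp hsub).1
    have hmem : Fml.or A B ∈ Γ ∪ {X} := hsub (by simp)
    have d1 := ih1 (Γ ∪ {B}) (cut_prem_sub hΓ₀)
    rw [Set.union_right_comm] at d1
    simp only [Set.mem_union, Set.mem_singleton_iff] at hmem
    rcases hmem with hm | hm
    · have := Der.orIR (A := A) d1
      rwa [cut_absorb (Set.mem_union_left Δ hm)] at this
    · exact horr A B hm.symm Γ d1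
  | allI h1 ih1 =>
    rename_i Γ₀ f
    intro Γ hsub
    have hΓ₀ : Γ₀ ⊆ Γ ∪ {X} := (Set.union_subset_iff.mp hsub).1
    have hmem : Fml.all f ∈ Γ ∪ {X} := hsub (by simp)
    have d : ∀ t, Der ((Γ ∪ Δ) ∪ {f t}) := by
      intro t
      have := ih1 t (Γ ∪ {f t}) (cut_prem_sub hΓ₀)
      rwa [Set.union_right_comm] at this
    simp only [Set.mem_union, Set.mem_singleton_iff] at hmem
    rcases hmem with hm | hm
    · have := Der.allI d
      rwa [cut_absorb (Set.mem_union_left Δ hm)] at this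
    · exact hall f hm.symm Γ d
  | exI t h1 ih1 =>
    rename_i Γ₀ f
    intro Γ hsub
    have hΓ₀ : Γ₀ ⊆ Γ ∪ {X} := (Set.union_subset_iff.mp hsub).1
    have hmem : Fml.ex f ∈ Γ ∪ {X} := hsub (by simp)
    have d := ih1 (Γ ∪ {f t}) (cut_prem_sub hΓ₀)
    rw [Set.union_right_comm] at d
    simp only [Set.mem_union, Set.mem_singleton_iff] at hmem
    rcases hmem with hm | hm
    · have := Der.exI t d
      rwa [cut_absorb (Set.mem_union_left Δ hm)] at this
    · exact hex f hm.symm Γ t d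
  | weak Δ₀ h1 ih1 =>
    intro Γ hsub
    exact ih1 Γ (Set.subset_union_left.trans hsub)

theorem cut_inv_and_l {Γ : Set (Fml atom term)} {B C : Fml atom term}
    (h : Der (Γ ∪ {Fml.and B C})) : Der (Γ ∪ {B}) := by
  refine cut_gen (X := Fml.and B C) (Δ := {B})
    (fun b hb => by cases hb) (fun b hb => by cases hb)
    (fun A' B' heq Γ' d1 _ => by
      injection heq with h1 h2; subst h1; subst h2
      rwa [cut_absorb (by simp)] at d1)
    (fun _ _ hb => by cases hb) (fun _ _ hb => by cases hb)
    (fun _ hb => by cases hb) (fun _ hb => by cases hb)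
    h Γ (subset_refl _)

theorem cut_inv_and_r {Γ : Set (Fml atom term)} {B C : Fml atom term}
    (h : Der (Γ ∪ {Fml.and B C})) : Der (Γ ∪ {C}) := by
  refine cut_gen (X := Fml.and B C) (Δ := {C})
    (fun b hb => by cases hb) (fun b hb => by cases hb)
    (fun A' B' heq Γ' _ d2 => by
      injection heq with h1 h2; subst h1; subst h2
      rwa [cut_absorb (by simp)] at d2)
    (fun _ _ hb => by cases hb) (fun _ _ hb => by cases hb)
    (fun _ hb => by cases hb) (fun _ hb => by cases hb)
    h Γ (subset_refl _)

theorem cut_inv_all {Γ : Set (Fml atom term)} {f : term → Fml atom term}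
    (h : Der (Γ ∪ {Fml.all f})) (t : term) : Der (Γ ∪ {f t}) := by
  refine cut_gen (X := Fml.all f) (Δ := {f t})
    (fun b hb => by cases hb) (fun b hb => by cases hb)
    (fun _ _ hb => by cases hb)
    (fun _ _ hb => by cases hb) (fun _ _ hb => by cases hb)
    (fun f' heq Γ' d => by
      injection heq with h1; subst h1
      have := d t
      rwa [cut_absorb (by simp)] at this)
    (fun _ hb => by cases hb)
    h Γ (subset_refl _)

/-- The cut property for a fixed cut formula. -/
def CutP (A : Fml atom term) : Prop :=
  ∀ ⦃Γ Δ : Set (Fml atom term)⦄, Der (Γ ∪ {A}) → Der (Δ ∪ {A.compl}) → Der (Γ ∪ Δ)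

theorem cutP_swap {A : Fml atom term} (h : CutP A) : CutP A.compl := by
  intro Γ Δ h1 h2
  rw [Fml.compl_compl] at h2
  rw [Set.union_comm]
  exact h h2 h1

theorem cutP_pos (a : atom) : CutP (term := term) (Fml.pos a) := by
  intro Γ Δ h1 h2
  refine cut_gen (X := Fml.pos a) (Δ := Δ)
    (fun b hb Γ' hmem => by
      injection hb with h'; subst h'
      exact h2.mono (Set.union_subset (Set.subset_union_right)
        (Set.singleton_subset_iff.mpr hmem)))
    (fun b hb => by cases hb)
    (fun _ _ hb => by cases hb)
    (fun _ _ hb => by cases hb) (fun _ _ hb => by cases hb)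
    (fun _ hb => by cases hb) (fun _ hb => by cases hb)
    h1 Γ (subset_refl _)

theorem cutP_or {B C : Fml atom term} (hB : CutP B) (hC : CutP C) :
    CutP (Fml.or B C) := by
  intro Γ Δ h1 h2
  have h2' : Der (Δ ∪ {Fml.and B.compl C.compl}) := h2
  refine cut_gen (X := Fml.or B C) (Δ := Δ)
    (fun b hb => by cases hb) (fun b hb => by cases hb)
    (fun _ _ hb => by cases hb)
    (fun A' B' heq Γ' d => by
      injection heq with e1 e2; subst e1; subst e2
      have := hB d (cut_inv_and_l h2')
      rwa [Set.union_assoc, Set.union_self] at this)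
    (fun A' B' heq Γ' d => by
      injection heq with e1 e2; subst e1; subst e2
      have := hC d (cut_inv_and_r h2')
      rwa [Set.union_assoc, Set.union_self] at this)
    (fun _ hb => by cases hb) (fun _ hb => by cases hb)
    h1 Γ (subset_refl _)

theorem cutP_ex {f : term → Fml atom term} (hf : ∀ t, CutP (f t)) :
    CutP (Fml.ex f) := by
  intro Γ Δ h1 h2
  have h2' : Der (Δ ∪ {Fml.all fun t => (f t).compl}) := h2
  refine cut_gen (X := Fml.ex f) (Δ := Δ)
    (fun b hb => by cases hb) (fun b hb => by cases hb)
    (fun _ _ hb => by cases hb)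
    (fun _ _ hb => by cases hb) (fun _ _ hb => by cases hb)
    (fun _ hb => by cases hb)
    (fun f' heq Γ' t d => by
      injection heq with e1; subst e1
      have := hf t d (cut_inv_all h2' t)
      rwa [Set.union_assoc, Set.union_self] at this)
    h1 Γ (subset_refl _)

theorem cutP_all (A : Fml atom term) : CutP A ∧ CutP A.compl := by
  induction A with
  | pos a => exact ⟨cutP_pos a, cutP_swap (cutP_pos a)⟩
  | neg a =>
    refine ⟨?_, cutP_pos a⟩
    have := cutP_swap (cutP_pos (term := term) a)
    exact this
  | and B C ihB ihC =>
    have h2 : CutP (Fml.and B C).compl := cutP_or ihB.2 ihC.2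
    refine ⟨?_, h2⟩
    have := cutP_swap h2
    rwa [Fml.compl_compl] at this
  | or B C ihB ihC =>
    exact ⟨cutP_or ihB.1 ihC.1, cutP_swap (cutP_or ihB.1 ihC.1)⟩
  | all f ih =>
    have h2 : CutP (Fml.all f).compl := cutP_ex (fun t => (ih t).2)
    refine ⟨?_, h2⟩
    have := cutP_swap h2
    rwa [Fml.compl_compl] at this
  | ex f ih =>
    exact ⟨cutP_ex (fun t => (ih t).1), cutP_swap (cutP_ex (fun t => (ih t).1))⟩

end CutAux

/-- Cut is admissible: if `Γ, A` and `Δ, ¬A` are derivable, so is `Γ, Δ`. -/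
theorem cut_admissible {atom term : Type u}
    {Γ Δ : Set (Fml atom term)} {A : Fml atom term}
    (h₁ : Der (Γ ∪ {A})) (h₂ : Der (Δ ∪ {A.compl})) :
    Der (Γ ∪ Δ) := by
  exact (cutP_all A).1 h₁ h₂
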